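/- Let a, b ∈ ℂ with b ≠ −1. Then every 1/2-derivation of the Lie algebra 𝒲(a,b) is trivial, i.e., a scalar multiple of the identity map. -/

import Mathlib

/-- The underlying space of the Lie algebra `𝒲(a,b)`, with basis
`L m = single (Sum.inl m) 1` and `I n = single (Sum.inr n) 1`. -/
abbrev Wab : Type := (ℤ ⊕ ℤ) →₀ ℂ

/-- The bracket of `𝒲(a,b)` on basis elements:
`[L m, L n] = (m-n) L (m+n)`, `[L m, I n] = -(n+a+bm) I (m+n)`, `[I m, I n] = 0`. -/
noncomputable def wabBasic (a b : ℂ) : ℤ ⊕ ℤ → ℤ ⊕ ℤ → Wab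
  | Sum.inl m, Sum.inl n => (((m : ℂ) - (n : ℂ))) • Finsupp.single (Sum.inl (m + n)) (1 : ℂ)
  | Sum.inl m, Sum.inr n => (-((n : ℂ) + a + b * (m : ℂ))) • Finsupp.single (Sum.inr (m + n)) (1 : ℂ)
  | Sum.inr m, Sum.inl n => (((m : ℂ) + a + b * (n : ℂ))) • Finsupp.single (Sum.inr (m + n)) (1 : ℂ)
  | Sum.inr _, Sum.inr _ => 0

/-- The Lie bracket of `𝒲(a,b)`, extended bilinearly from basis elements. -/
noncomputable def wabBracket (a b : ℂ) (f g : Wab) : Wab :=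
  f.sum fun p c => g.sum fun q d => (c * d) • wabBasic a b p q

/-- The basis element `L m` of `𝒲(a,b)`. -/
noncomputable def Lgen (m : ℤ) : Wab := Finsupp.single (Sum.inl m) 1

/-- The basis element `I m` of `𝒲(a,b)`. -/
noncomputable def Igen (m : ℤ) : Wab := Finsupp.single (Sum.inr m) 1

lemma sum_pt (f : Wab) (t : ℤ ⊕ ℤ) (v : ℂ) :
    (f.sum fun p c => if p = t then c * v else 0) = f t * v := by
  classical
  rw [Finsupp.sum, Finset.sum_ite_eq' f.support t (fun p => f p * v)]
  split
  · rfl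
  · rw [Finsupp.notMem_support_iff.mp ‹_›, zero_mul]

lemma bracket_apply (a b : ℂ) (f g : Wab) (r : ℤ ⊕ ℤ) :
    wabBracket a b f g r = f.sum fun p c => g.sum fun q d => (c * d) * wabBasic a b p q r := by
  rw [wabBracket, Finsupp.sum_apply]
  refine Finsupp.sum_congr fun p _ => ?_
  rw [Finsupp.sum_apply]
  exact Finsupp.sum_congr fun q _ => by rw [Finsupp.smul_apply, smul_eq_mul]

lemma bracket_gen_right (a b : ℂ) (f : Wab) (q0 : ℤ ⊕ ℤ) (r : ℤ ⊕ ℤ) :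
    wabBracket a b f (Finsupp.single q0 1) r
      = f.sum fun p c => c * wabBasic a b p q0 r := by
  rw [bracket_apply]
  have inner : ∀ (p : ℤ ⊕ ℤ) (c : ℂ),
      ((Finsupp.single q0 (1:ℂ)).sum fun q d => (c * d) * wabBasic a b p q r)
        = c * wabBasic a b p q0 r := by
    intro p c
    rw [Finsupp.sum_single_index (by simp)]
    ring
  simp only [inner]

lemma bracket_gen_left (a b : ℂ) (f : Wab) (p0 : ℤ ⊕ ℤ) (r : ℤ ⊕ ℤ) :
    wabBracket a b (Finsupp.single p0 1) f r
      = f.sum fun q d => d * wabBasic a b p0 q r := by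
  rw [bracket_apply, Finsupp.sum_single_index (by simp)]
  refine Finsupp.sum_congr fun q _ => by ring

lemma ev_L_right_inl (a b : ℂ) (f : Wab) (n k : ℤ) :
    wabBracket a b f (Lgen n) (Sum.inl k) = ((k : ℂ) - 2 * n) * f (Sum.inl (k - n)) := by
  classical
  rw [Lgen, bracket_gen_right]
  have : (f.sum fun p c => c * wabBasic a b p (Sum.inl n) (Sum.inl k))
      = f.sum fun p c => if p = Sum.inl (k - n) then c * ((k : ℂ) - 2 * n) else 0 := by
    refine Finsupp.sum_congr fun p _ => ?_
    rcases p with i | i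
    · simp only [wabBasic, Finsupp.smul_apply, Finsupp.single_apply, smul_eq_mul]
      by_cases h : i = k - n
      · subst h
        simp only [Sum.inl.injEq, if_pos rfl, if_pos (by omega : k - n + n = k)]
        push_cast
        ring
      · rw [if_neg (by simp; omega), if_neg (by simp [h])]
        ring
    · simp [wabBasic, Finsupp.single_apply]
  rw [this, sum_pt]
  ring

lemma ev_L_right_inr (a b : ℂ) (f : Wab) (n k : ℤ) :
    wabBracket a b f (Lgen n) (Sum.inr k)
      = ((k : ℂ) - n + a + b * n) * f (Sum.inr (k - n)) := by
  classical
  rw [Lgen, bracket_gen_right]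
  have : (f.sum fun p c => c * wabBasic a b p (Sum.inl n) (Sum.inr k))
      = f.sum fun p c => if p = Sum.inr (k - n) then c * ((k : ℂ) - n + a + b * n) else 0 := by
    refine Finsupp.sum_congr fun p _ => ?_
    rcases p with i | i
    · simp [wabBasic, Finsupp.single_apply]
    · simp only [wabBasic, Finsupp.smul_apply, Finsupp.single_apply, smul_eq_mul]
      by_cases h : i = k - n
      · subst h
        simp only [Sum.inr.injEq, if_pos rfl, if_pos (by omega : k - n + n = k)]
        push_cast
        ring
      · rw [if_neg (by simp; omega), if_neg (by simp [h])]
        ring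
  rw [this, sum_pt]
  ring

lemma ev_L_left_inl (a b : ℂ) (f : Wab) (m k : ℤ) :
    wabBracket a b (Lgen m) f (Sum.inl k) = (2 * (m : ℂ) - k) * f (Sum.inl (k - m)) := by
  classical
  rw [Lgen, bracket_gen_left]
  have : (f.sum fun q d => d * wabBasic a b (Sum.inl m) q (Sum.inl k))
      = f.sum fun q d => if q = Sum.inl (k - m) then d * (2 * (m : ℂ) - k) else 0 := by
    refine Finsupp.sum_congr fun q _ => ?_
    rcases q with j | j
    · simp only [wabBasic, Finsupp.smul_apply, Finsupp.single_apply, smul_eq_mul]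
      by_cases h : j = k - m
      · subst h
        simp only [Sum.inl.injEq, if_pos rfl, if_pos (by omega : m + (k - m) = k)]
        push_cast
        ring
      · rw [if_neg (by simp; omega), if_neg (by simp [h])]
        ring
    · simp [wabBasic, Finsupp.single_apply]
  rw [this, sum_pt]
  ring

lemma ev_L_left_inr (a b : ℂ) (f : Wab) (m k : ℤ) :
    wabBracket a b (Lgen m) f (Sum.inr k)
      = -(((k : ℂ) - m) + a + b * m) * f (Sum.inr (k - m)) := by
  classical
  rw [Lgen, bracket_gen_left]
  have : (f.sum fun q d => d * wabBasic a b (Sum.inl m) q (Sum.inr k))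
      = f.sum fun q d => if q = Sum.inr (k - m) then d * (-(((k : ℂ) - m) + a + b * m)) else 0 := by
    refine Finsupp.sum_congr fun q _ => ?_
    rcases q with j | j
    · simp [wabBasic, Finsupp.single_apply]
    · simp only [wabBasic, Finsupp.smul_apply, Finsupp.single_apply, smul_eq_mul]
      by_cases h : j = k - m
      · subst h
        simp only [Sum.inr.injEq, if_pos rfl, if_pos (by omega : m + (k - m) = k)]
        push_cast
        ring
      · rw [if_neg (by simp; omega), if_neg (by simp [h])]
        ring
  rw [this, sum_pt]
  ring

lemma ev_I_right_inl (a b : ℂ) (f : Wab) (n k : ℤ) :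
    wabBracket a b f (Igen n) (Sum.inl k) = 0 := by
  classical
  rw [Igen, bracket_gen_right]
  have : (f.sum fun p c => c * wabBasic a b p (Sum.inr n) (Sum.inl k))
      = f.sum fun _ _ => (0:ℂ) := by
    refine Finsupp.sum_congr fun p _ => ?_
    rcases p with i | i
    · simp [wabBasic, Finsupp.single_apply]
    · simp [wabBasic]
  rw [this, Finsupp.sum_fun_zero]

lemma ev_I_right_inr (a b : ℂ) (f : Wab) (n k : ℤ) :
    wabBracket a b f (Igen n) (Sum.inr k)
      = -((n : ℂ) + a + b * ((k : ℂ) - n)) * f (Sum.inl (k - n)) := by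
  classical
  rw [Igen, bracket_gen_right]
  have : (f.sum fun p c => c * wabBasic a b p (Sum.inr n) (Sum.inr k))
      = f.sum fun p c =>
          if p = Sum.inl (k - n) then c * (-((n : ℂ) + a + b * ((k : ℂ) - n))) else 0 := by
    refine Finsupp.sum_congr fun p _ => ?_
    rcases p with i | i
    · simp only [wabBasic, Finsupp.smul_apply, Finsupp.single_apply, smul_eq_mul]
      by_cases h : i = k - n
      · subst h
        simp only [Sum.inl.injEq, Sum.inr.injEq, if_pos rfl, if_pos (by omega : k - n + n = k)]
        push_cast
        ring
      · rw [if_neg (by simp; omega), if_neg (by simp [h])]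
        ring
    · simp [wabBasic, Finsupp.single_apply]
  rw [this, sum_pt]
  ring

lemma brLL (a b : ℂ) (m n : ℤ) :
    wabBracket a b (Lgen m) (Lgen n) = ((m : ℂ) - n) • Lgen (m + n) := by
  rw [wabBracket, Lgen, Lgen, Finsupp.sum_single_index (by simp), Finsupp.sum_single_index (by simp)]
  simp [wabBasic, Lgen]

lemma brLI (a b : ℂ) (m n : ℤ) :
    wabBracket a b (Lgen m) (Igen n) = (-((n : ℂ) + a + b * m)) • Igen (m + n) := by
  rw [wabBracket, Lgen, Igen, Finsupp.sum_single_index (by simp), Finsupp.sum_single_index (by simp)]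
  simp [wabBasic, Igen]

section eqs

variable {a b : ℂ} {φ : Wab →ₗ[ℂ] Wab}
variable (hφ : ∀ x y : Wab, φ (wabBracket a b x y) =
        (1 / 2 : ℂ) • (wabBracket a b (φ x) y + wabBracket a b x (φ y)))

include hφ

lemma eLLL (m n k : ℤ) :
    2 * ((m : ℂ) - n) * φ (Lgen (m + n)) (Sum.inl k)
      = ((k : ℂ) - 2 * n) * φ (Lgen m) (Sum.inl (k - n))
        + (2 * (m : ℂ) - k) * φ (Lgen n) (Sum.inl (k - m)) := by
  have h0 := hφ (Lgen m) (Lgen n)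
  rw [brLL, map_smul] at h0
  have h := congrArg (fun z : Wab => z (Sum.inl k)) h0
  simp only [Finsupp.smul_apply, Finsupp.add_apply, smul_eq_mul,
    ev_L_right_inl, ev_L_left_inl] at h
  linear_combination 2 * h

lemma eLLI (m n k : ℤ) :
    2 * ((m : ℂ) - n) * φ (Lgen (m + n)) (Sum.inr k)
      = ((k : ℂ) - n + a + b * n) * φ (Lgen m) (Sum.inr (k - n))
        - ((k : ℂ) - m + a + b * m) * φ (Lgen n) (Sum.inr (k - m)) := by
  have h0 := hφ (Lgen m) (Lgen n)
  rw [brLL, map_smul] at h0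
  have h := congrArg (fun z : Wab => z (Sum.inr k)) h0
  simp only [Finsupp.smul_apply, Finsupp.add_apply, smul_eq_mul,
    ev_L_right_inr, ev_L_left_inr] at h
  linear_combination 2 * h

lemma eLIL (m n k : ℤ) :
    -2 * ((n : ℂ) + a + b * m) * φ (Igen (m + n)) (Sum.inl k)
      = (2 * (m : ℂ) - k) * φ (Igen n) (Sum.inl (k - m)) := by
  have h0 := hφ (Lgen m) (Igen n)
  rw [brLI, map_smul] at h0
  have h := congrArg (fun z : Wab => z (Sum.inl k)) h0
  simp only [Finsupp.smul_apply, Finsupp.add_apply, smul_eq_mul,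
    ev_I_right_inl, ev_L_left_inl] at h
  linear_combination 2 * h

lemma eLII (m n k : ℤ) :
    -2 * ((n : ℂ) + a + b * m) * φ (Igen (m + n)) (Sum.inr k)
      = -((n : ℂ) + a + b * ((k : ℂ) - n)) * φ (Lgen m) (Sum.inl (k - n))
        - ((k : ℂ) - m + a + b * m) * φ (Igen n) (Sum.inr (k - m)) := by
  have h0 := hφ (Lgen m) (Igen n)
  rw [brLI, map_smul] at h0
  have h := congrArg (fun z : Wab => z (Sum.inr k)) h0
  simp only [Finsupp.smul_apply, Finsupp.add_apply, smul_eq_mul,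
    ev_I_right_inr, ev_L_left_inr] at h
  linear_combination 2 * h

lemma hC (n j : ℤ) : φ (Igen n) (Sum.inl j) = 0 := by
  by_cases hc : φ (Igen n) (Sum.inl j) = 0
  · exact hc
  exfalso
  -- from eLIL with m = 0 we get the eigenvalue equation
  have h0 := eLIL hφ 0 n j
  simp only [zero_add, sub_zero] at h0
  have h1 : ((j : ℂ) - 2 * n - 2 * a) * φ (Igen n) (Sum.inl j) = 0 := by
    push_cast at h0 ⊢
    linear_combination h0
  have hfac : (j : ℂ) - 2 * n - 2 * a = 0 := by
    rcases mul_eq_zero.mp h1 with h | h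
    · exact h
    · exact absurd h hc
  set m : ℤ := if j = -1 then 1 else j + 1 with hm
  have hm0 : m ≠ 0 ∧ m ≠ j := by
    rw [hm]; split <;> omega
  -- C (n+m) (j+m) = 0
  have h2 := eLIL hφ 0 (n + m) (j + m)
  simp only [zero_add, sub_zero] at h2
  have h3 : -((m : ℂ)) * φ (Igen (n + m)) (Sum.inl (j + m)) = 0 := by
    push_cast at h2 ⊢
    linear_combination h2 - (φ (Igen (n + m)) (Sum.inl (j + m))) * hfac
  have h4 : φ (Igen (n + m)) (Sum.inl (j + m)) = 0 := by
    rcases mul_eq_zero.mp h3 with h | h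
    · exact absurd (by exact_mod_cast neg_eq_zero.mp h) hm0.1
    · exact h
  -- main equation
  have h5 := eLIL hφ m n (j + m)
  rw [add_comm m n] at h5
  have e1 : j + m - m = j := by ring
  rw [e1, h4] at h5
  have h6 : ((m : ℂ) - j) * φ (Igen n) (Sum.inl j) = 0 := by
    push_cast at h5 ⊢
    linear_combination -h5
  rcases mul_eq_zero.mp h6 with h | h
  · have : (m : ℂ) = (j : ℂ) := by linear_combination h
    exact hm0.2 (by exact_mod_cast this)
  · exact hc h

lemma hAshift (n k : ℤ) (h : k ≠ 2 * n) :
    φ (Lgen n) (Sum.inl k) = φ (Lgen 0) (Sum.inl (k - n)) := by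
  have h0 := eLLL hφ 0 n k
  simp only [zero_add, sub_zero] at h0
  have h1 : ((k : ℂ) - 2 * n) * (φ (Lgen n) (Sum.inl k) - φ (Lgen 0) (Sum.inl (k - n))) = 0 := by
    push_cast at h0 ⊢
    linear_combination h0
  have hne : (k : ℂ) - 2 * n ≠ 0 := by
    intro hz
    have : ((k : ℂ)) = ((2 * n : ℤ) : ℂ) := by push_cast; linear_combination hz
    exact h (by exact_mod_cast this)
  have := (mul_eq_zero.mp h1).resolve_left hne
  exact sub_eq_zero.mp this

lemma hD1 (n k : ℤ) :
    ((k : ℂ) - 2 * n - a) * φ (Igen n) (Sum.inr k)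
      = -((n : ℂ) + a + b * ((k : ℂ) - n)) * φ (Lgen 0) (Sum.inl (k - n)) := by
  have h0 := eLII hφ 0 n k
  simp only [zero_add, sub_zero] at h0
  push_cast at h0 ⊢
  linear_combination h0

lemma hG (m n k : ℤ) (h : k - n ≠ 2 * m) :
    -2 * ((n : ℂ) + a + b * m) * φ (Igen (m + n)) (Sum.inr k)
      = -((n : ℂ) + a + b * ((k : ℂ) - n)) * φ (Lgen 0) (Sum.inl (k - n - m))
        - ((k : ℂ) - m + a + b * m) * φ (Igen n) (Sum.inr (k - m)) := by
  have h0 := eLII hφ m n k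
  rw [hAshift hφ m (k - n) h] at h0
  exact h0

lemma hAzero (s : ℤ) (hs : s ≠ 0) (hb : b ≠ -1) : φ (Lgen 0) (Sum.inl s) = 0 := by
  -- key instance lemma
  have hP : ∀ m n : ℤ, m ≠ s →
      (2 * ((n : ℂ) + a + b * m) * ((m : ℂ) + n + a + b * s) * ((s : ℂ) - n - a)
        + ((n : ℂ) + a + b * s + b * m) * ((s : ℂ) - m - n - a) * ((s : ℂ) - n - a)
        - ((s : ℂ) + n + a + b * m) * ((n : ℂ) + a + b * s) * ((s : ℂ) - m - n - a))
        * φ (Lgen 0) (Sum.inl s) = 0 := by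
    intro m n hms
    have h3 := hG hφ m n (s + m + n) (by omega)
    have e1 : s + m + n - n - m = s := by ring
    have e2 : s + m + n - m = s + n := by ring
    rw [e1, e2] at h3
    have h1 := hD1 hφ (m + n) (s + m + n)
    have e3 : s + m + n - (m + n) = s := by ring
    rw [e3] at h1
    have h2 := hD1 hφ n (s + n)
    have e4 : s + n - n = s := by ring
    rw [e4] at h2
    push_cast at h1 h2 h3 ⊢
    linear_combination (((s : ℂ) - m - n - a) * ((s : ℂ) - n - a)) * h3
      + (2 * ((n : ℂ) + a + b * m) * ((s : ℂ) - n - a)) * h1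
      - (((s : ℂ) + n + a + b * m) * ((s : ℂ) - m - n - a)) * h2
  have q1 := hP (s + 1) 0 (by omega)
  have q2 := hP (s + 2) 0 (by omega)
  have q3 := hP (s + 3) 0 (by omega)
  have q4 := hP (s + 1) 1 (by omega)
  have q5 := hP (s + 2) 1 (by omega)
  have key : 4 * (s : ℂ) * (1 + b) * φ (Lgen 0) (Sum.inl s) = 0 := by
    push_cast at q1 q2 q3 q4 q5 ⊢
    linear_combination 3 * q1 - 4 * q2 + q3 - 2 * q4 + 2 * q5
  have hs' : (s : ℂ) ≠ 0 := Int.cast_ne_zero.mpr hs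
  have hb' : (1 : ℂ) + b ≠ 0 := by
    intro hz; exact hb (by linear_combination hz)
  have h4 : (4 : ℂ) * s * (1 + b) ≠ 0 := by
    simp [hs', hb']
  exact (mul_eq_zero.mp key).resolve_left h4

lemma hAdiag (n : ℤ) : φ (Lgen n) (Sum.inl n) = φ (Lgen 0) (Sum.inl 0) := by
  by_cases hn : n = 0
  · subst hn; rfl
  · have h := hAshift hφ n n (by omega)
    have e : n - n = 0 := by ring
    rwa [e] at h

lemma hAoff (hb : b ≠ -1) (n k : ℤ) (h : k ≠ n) : φ (Lgen n) (Sum.inl k) = 0 := by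
  by_cases h2n : k = 2 * n
  · -- k = 2n, n ≠ 0
    subst h2n
    have hn0 : n ≠ 0 := by omega
    set m : ℤ := if n = 1 ∨ n = 2 then 3 else 1 with hm
    have hmp : m ≠ 0 ∧ m ≠ n ∧ 2 * m ≠ n := by
      rw [hm]; split <;> omega
    have h0 := eLLL hφ m (n - m) (2 * n)
    have e1 : m + (n - m) = n := by ring
    rw [e1] at h0
    have hv1 : φ (Lgen m) (Sum.inl (2 * n - (n - m))) = 0 := by
      have e2 : 2 * n - (n - m) = n + m := by ring
      rw [e2, hAshift hφ m (n + m) (by omega)]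
      have e3 : n + m - m = n := by ring
      rw [e3]
      exact hAzero hφ n hn0 hb
    have hv2 : φ (Lgen (n - m)) (Sum.inl (2 * n - m)) = 0 := by
      rw [hAshift hφ (n - m) (2 * n - m) (by omega)]
      have e3 : 2 * n - m - (n - m) = n := by ring
      rw [e3]
      exact hAzero hφ n hn0 hb
    rw [hv1, hv2] at h0
    have h1 : (2 * ((m : ℂ) - (n - m))) * φ (Lgen n) (Sum.inl (2 * n)) = 0 := by
      push_cast at h0 ⊢
      linear_combination h0
    rcases mul_eq_zero.mp h1 with hz | hz
    · exfalso
      have hz' : ((2 * m - n : ℤ) : ℂ) = 0 := by push_cast; linear_combination hz / 2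
      have : (2 * m - n : ℤ) = 0 := by exact_mod_cast hz'
      omega
    · exact hz
  · rw [hAshift hφ n k h2n]
    exact hAzero hφ (k - n) (by omega) hb

lemma hH1 (n k : ℤ) :
    ((k : ℂ) + a - 2 * n) * φ (Lgen n) (Sum.inr k)
      = ((k : ℂ) - n + a + b * n) * φ (Lgen 0) (Sum.inr (k - n)) := by
  have h0 := eLLI hφ 0 n k
  simp only [zero_add, sub_zero] at h0
  push_cast at h0 ⊢
  linear_combination h0

lemma hQl (s m n : ℤ) :
    (2 * ((m : ℂ) - n) * ((s : ℂ) + a + b * (m + n)) * ((s : ℂ) - m + a) * ((s : ℂ) - n + a)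
      - ((s : ℂ) + m + a + b * n) * ((s : ℂ) + a + b * m) * ((s : ℂ) - m - n + a) * ((s : ℂ) - n + a)
      + ((s : ℂ) + n + a + b * m) * ((s : ℂ) + a + b * n) * ((s : ℂ) - m - n + a) * ((s : ℂ) - m + a))
      * φ (Lgen 0) (Sum.inr s) = 0 := by
  have hm := eLLI hφ m n (s + m + n)
  have e1 : s + m + n - n = s + m := by ring
  have e2 : s + m + n - m = s + n := by ring
  rw [e1, e2] at hm
  have h1 := hH1 hφ (m + n) (s + m + n)
  have e3 : s + m + n - (m + n) = s := by ring
  rw [e3] at h1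
  have h2 := hH1 hφ m (s + m)
  have e4 : s + m - m = s := by ring
  rw [e4] at h2
  have h3 := hH1 hφ n (s + n)
  have e5 : s + n - n = s := by ring
  rw [e5] at h3
  push_cast at hm h1 h2 h3 ⊢
  linear_combination (((s : ℂ) - m - n + a) * ((s : ℂ) - m + a) * ((s : ℂ) - n + a)) * hm
    - (2 * ((m : ℂ) - n) * ((s : ℂ) - m + a) * ((s : ℂ) - n + a)) * h1
    + (((s : ℂ) + m + a + b * n) * ((s : ℂ) - m - n + a) * ((s : ℂ) - n + a)) * h2
    - (((s : ℂ) + n + a + b * m) * ((s : ℂ) - m - n + a) * ((s : ℂ) - m + a)) * h3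

lemma hbeta (hb : b ≠ -1) (s : ℤ) : φ (Lgen 0) (Sum.inr s) = 0 := by
  have hb' : (1 : ℂ) + b ≠ 0 := by
    intro hz; exact hb (by linear_combination hz)
  have q31 := hQl hφ s 3 1
  have q32 := hQl hφ s 3 2
  have q21 := hQl hφ s 2 1
  have k1 : b * (1 + b) * φ (Lgen 0) (Sum.inr s) = 0 := by
    push_cast at q31 q32 ⊢
    linear_combination (1 / 6 : ℂ) * q32 - (1 / 6 : ℂ) * q31
  have k2 : ((s : ℂ) + a) * ((1 + b) * (2 - b) * φ (Lgen 0) (Sum.inr s)) = 0 := by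
    push_cast at q21 ⊢
    linear_combination (1 / 2 : ℂ) * q21 - 3 * k1
  by_cases hsa : (s : ℂ) + a = 0
  · by_cases hb0 : b = 0
    · subst hb0
      -- special argument for b = 0, s + a = 0
      have hside : ∀ m : ℤ, m ≠ 0 → φ (Lgen m) (Sum.inr (s + m)) = 0 := by
        intro m hm0
        have h0 := eLLI hφ m 0 (s + m)
        simp only [add_zero, sub_zero] at h0
        have e1 : s + m - m = s := by ring
        rw [e1] at h0
        have h1 : (m : ℂ) * φ (Lgen m) (Sum.inr (s + m)) = 0 := by
          push_cast at h0 ⊢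
          linear_combination h0 + (φ (Lgen m) (Sum.inr (s + m)) - φ (Lgen 0) (Sum.inr s)) * hsa
        exact (mul_eq_zero.mp h1).resolve_left (Int.cast_ne_zero.mpr hm0)
      have h5 := eLLI hφ 1 (-1) s
      norm_num at h5
      have e2 : s - 1 = s + (-1) := by ring
      have e1 : s + 1 = s + 1 := rfl
      rw [e2] at h5
      rw [hside 1 (by omega), hside (-1) (by omega)] at h5
      have h6 : (4 : ℂ) * φ (Lgen 0) (Sum.inr s) = 0 := by
        linear_combination h5
      have : (4 : ℂ) ≠ 0 := by norm_num
      exact (mul_eq_zero.mp h6).resolve_left this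
    · -- b ≠ 0
      have := (mul_eq_zero.mp k1).resolve_left (mul_ne_zero hb0 hb')
      exact this
  · have k3 := (mul_eq_zero.mp k2).resolve_left hsa
    have k4 : 2 * (1 + b) * φ (Lgen 0) (Sum.inr s) = 0 := by
      linear_combination k3 + k1
    have : (2 : ℂ) * (1 + b) ≠ 0 := mul_ne_zero two_ne_zero hb'
    exact (mul_eq_zero.mp k4).resolve_left this

lemma hB (hb : b ≠ -1) (n k : ℤ) : φ (Lgen n) (Sum.inr k) = 0 := by
  have h0 := hH1 hφ n k
  rw [hbeta hφ hb (k - n)] at h0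
  by_cases hf : (k : ℂ) + a - 2 * n = 0
  · -- bad case
    set m : ℤ := if n = 1 ∨ n = 2 then 3 else 1 with hm
    have hmp : m ≠ 0 ∧ m ≠ n ∧ 2 * m ≠ n := by
      rw [hm]; split <;> omega
    have hv1 : φ (Lgen m) (Sum.inr (k - (n - m))) = 0 := by
      have h1 := hH1 hφ m (k - (n - m))
      rw [hbeta hφ hb (k - (n - m) - m)] at h1
      have hf1 : ((k - (n - m) : ℤ) : ℂ) + a - 2 * m ≠ 0 := by
        intro hz
        have : ((n - m : ℤ) : ℂ) = 0 := by push_cast at hz ⊢; linear_combination hz - hf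
        have : (n - m : ℤ) = 0 := by exact_mod_cast this
        omega
      have := mul_eq_zero.mp (by rw [mul_zero] at h1; exact h1)
      exact this.resolve_left hf1
    have hv2 : φ (Lgen (n - m)) (Sum.inr (k - m)) = 0 := by
      have h1 := hH1 hφ (n - m) (k - m)
      rw [hbeta hφ hb (k - m - (n - m))] at h1
      have hf1 : ((k - m : ℤ) : ℂ) + a - 2 * ((n - m : ℤ) : ℂ) ≠ 0 := by
        intro hz
        have : ((m : ℤ) : ℂ) = 0 := by push_cast at hz ⊢; linear_combination hz - hf
        have : (m : ℤ) = 0 := by exact_mod_cast this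
        omega
      have := mul_eq_zero.mp (by rw [mul_zero] at h1; exact h1)
      exact this.resolve_left hf1
    have h2 := eLLI hφ m (n - m) k
    have e1 : m + (n - m) = n := by ring
    rw [e1, hv1, hv2] at h2
    have h3 : (2 * (2 * (m : ℂ) - n)) * φ (Lgen n) (Sum.inr k) = 0 := by
      push_cast at h2 ⊢
      linear_combination h2
    have hf2 : 2 * (2 * (m : ℂ) - n) ≠ 0 := by
      intro hz
      have : ((2 * m - n : ℤ) : ℂ) = 0 := by push_cast; linear_combination hz / 2
      have : (2 * m - n : ℤ) = 0 := by exact_mod_cast this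
      omega
    exact (mul_eq_zero.mp h3).resolve_left hf2
  · rw [mul_zero] at h0
    exact (mul_eq_zero.mp h0).resolve_left hf

lemma hDd0 (t : ℤ) (ht : (t : ℂ) + a ≠ 0) :
    φ (Igen t) (Sum.inr t) = φ (Lgen 0) (Sum.inl 0) := by
  have h := hD1 hφ t t
  have e : t - t = 0 := by ring
  rw [e] at h
  have h1 : ((t : ℂ) + a) * (φ (Igen t) (Sum.inr t) - φ (Lgen 0) (Sum.inl 0)) = 0 := by
    linear_combination -h
  have := (mul_eq_zero.mp h1).resolve_left ht
  exact sub_eq_zero.mp this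

lemma hDdiag (n : ℤ) :
    φ (Igen n) (Sum.inr n) = φ (Lgen 0) (Sum.inl 0) := by
  by_cases hna : (n : ℂ) + a = 0
  · by_cases hb0 : b = 0
    · subst hb0
      have h := eLII hφ 1 (n - 1) n
      have e1 : 1 + (n - 1) = n := by ring
      have e2 : n - (n - 1) = 1 := by ring
      rw [e1, e2, hAdiag hφ 1] at h
      have hprev : φ (Igen (n - 1)) (Sum.inr (n - 1)) = φ (Lgen 0) (Sum.inl 0) := by
        refine hDd0 hφ (n - 1) ?_
        intro hz
        push_cast at hz
        exact one_ne_zero (by linear_combination hna - hz : (1 : ℂ) = 0)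
      rw [hprev] at h
      have h1 : (2 : ℂ) * (φ (Igen n) (Sum.inr n) - φ (Lgen 0) (Sum.inl 0)) = 0 := by
        push_cast at h ⊢
        linear_combination h + (2 * (φ (Igen n) (Sum.inr n) - φ (Lgen 0) (Sum.inl 0))) * hna
      have := (mul_eq_zero.mp h1).resolve_left two_ne_zero
      exact sub_eq_zero.mp this
    · have h := eLII hφ 1 n (n + 1)
      have e1 : 1 + n = n + 1 := by ring
      have e2 : n + 1 - n = 1 := by ring
      have e3 : n + 1 - 1 = n := by ring
      rw [e1, e2, e3, hAdiag hφ 1] at h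
      have hnext : φ (Igen (n + 1)) (Sum.inr (n + 1)) = φ (Lgen 0) (Sum.inl 0) := by
        refine hDd0 hφ (n + 1) ?_
        intro hz
        push_cast at hz
        exact one_ne_zero (by linear_combination hz - hna)
      rw [hnext] at h
      have h1 : b * (φ (Igen n) (Sum.inr n) - φ (Lgen 0) (Sum.inl 0)) = 0 := by
        push_cast at h ⊢
        linear_combination h - (φ (Igen n) (Sum.inr n) - φ (Lgen 0) (Sum.inl 0)) * hna
      have := (mul_eq_zero.mp h1).resolve_left hb0
      exact sub_eq_zero.mp this
  · exact hDd0 hφ n hna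

lemma hDoff (hb : b ≠ -1) (n k : ℤ) (h : k ≠ n) : φ (Igen n) (Sum.inr k) = 0 := by
  have h0 := hD1 hφ n k
  rw [hAzero hφ (k - n) (by omega) hb, mul_zero] at h0
  by_cases hf : (k : ℂ) - 2 * n - a = 0
  · -- bad case
    have hm : ∃ m : ℤ, m ≠ 0 ∧ ((k : ℂ) - n) - m * (1 - b) ≠ 0 := by
      by_cases h1 : ((k : ℂ) - n) - 1 * (1 - b) = 0
      · refine ⟨2, by omega, ?_⟩
        intro h2
        push_cast at h2
        have h3 : (1 : ℂ) - b = 0 := by linear_combination h1 - h2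
        have h4 : (k : ℂ) - n = 0 := by linear_combination h1 + h3
        have : ((k - n : ℤ) : ℂ) = 0 := by push_cast; linear_combination h4
        have : (k - n : ℤ) = 0 := by exact_mod_cast this
        omega
      · refine ⟨1, by omega, ?_⟩
        push_cast
        exact h1
    obtain ⟨m, hm0, hmne⟩ := hm
    have hside : φ (Igen (n - m)) (Sum.inr (k - m)) = 0 := by
      have h1 := hD1 hφ (n - m) (k - m)
      have e1 : k - m - (n - m) = k - n := by ring
      rw [e1, hAzero hφ (k - n) (by omega) hb, mul_zero] at h1
      have hf1 : ((k - m : ℤ) : ℂ) - 2 * ((n - m : ℤ) : ℂ) - a ≠ 0 := by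
        intro hz
        push_cast at hz
        exact Int.cast_ne_zero.mpr hm0 (by linear_combination hz - hf : (m : ℂ) = 0)
      exact (mul_eq_zero.mp h1).resolve_left hf1
    have h2 := eLII hφ m (n - m) k
    have e1 : m + (n - m) = n := by ring
    rw [e1] at h2
    have hAv : φ (Lgen m) (Sum.inl (k - (n - m))) = 0 := by
      refine hAoff hφ hb m (k - (n - m)) ?_
      omega
    rw [hAv, hside] at h2
    have h3 : (-2 * (((k : ℂ) - n) - m * (1 - b))) * φ (Igen n) (Sum.inr k) = 0 := by
      push_cast at h2 ⊢
      linear_combination h2 - (2 * φ (Igen n) (Sum.inr k)) * hf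
    have hne : (-2 : ℂ) * (((k : ℂ) - n) - m * (1 - b)) ≠ 0 :=
      mul_ne_zero (by norm_num) hmne
    exact (mul_eq_zero.mp h3).resolve_left hne
  · exact (mul_eq_zero.mp h0).resolve_left hf

end eqs


/-- For `b ≠ -1`, every 1/2-derivation of `𝒲(a,b)` is trivial. -/
theorem wab_half_derivation_trivial (a b : ℂ) (hb : b ≠ -1)
    (φ : Wab →ₗ[ℂ] Wab)
    (hφ : ∀ x y : Wab, φ (wabBracket a b x y) =
        (1 / 2 : ℂ) • (wabBracket a b (φ x) y + wabBracket a b x (φ y))) :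
    ∃ κ : ℂ, φ = κ • LinearMap.id := by
  classical
  set κ : ℂ := φ (Lgen 0) (Sum.inl 0) with hκ
  have key : ∀ p : ℤ ⊕ ℤ, φ (Finsupp.single p 1) = κ • Finsupp.single p 1 := by
    intro p
    ext r
    rw [Finsupp.smul_apply, Finsupp.single_apply, smul_eq_mul]
    rcases p with n | n <;> rcases r with k | k
    · by_cases hkn : k = n
      · subst hkn
        rw [if_pos rfl, mul_one]
        exact hAdiag hφ k
      · rw [if_neg (by simp [Ne.symm hkn]), mul_zero]
        exact hAoff hφ hb n k hkn
    · rw [if_neg (by simp), mul_zero]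
      exact hB hφ hb n k
    · rw [if_neg (by simp), mul_zero]
      exact hC hφ n k
    · by_cases hkn : k = n
      · subst hkn
        rw [if_pos rfl, mul_one]
        exact hDdiag hφ k
      · rw [if_neg (by simp [Ne.symm hkn]), mul_zero]
        exact hDoff hφ hb n k hkn
  refine ⟨κ, Finsupp.lhom_ext fun p c => ?_⟩
  have h1 : (Finsupp.single p c : Wab) = c • Finsupp.single p 1 := by
    rw [Finsupp.smul_single, smul_eq_mul, mul_one]
  rw [h1, map_smul, key p, LinearMap.smul_apply, LinearMap.id_apply]
  rw [smul_comm]
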